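/- The Blocksworld 'ontable' goal is achieved by the triple nested loop program that, for all triples (z1,z2,z3), attempts put_down(z2) then unstack(z2,z3): starting from any legal Blocksworld state with N blocks (hand empty), the state after execution has every block on the table. -/

import Mathlib

/-- A Blocksworld state with `N` blocks: `below x` is the block that `x`
rests on (`none` if `x` is on the table or held), and `hold` is the block
currently held by the hand (if any). -/
structure BState (N : ℕ) where
  below : Fin N → Option (Fin N)
  hold : Option (Fin N)

/-- A legal Blocksworld state: towers are finite (no cycles, witnessed by a
height function), and a held block rests on nothing and has nothing on it. -/
def Legal {N : ℕ} (s : BState N) : Prop :=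
  (∃ h : Fin N → ℕ, ∀ x y, s.below x = some y → h x = h y + 1) ∧
  (∀ b, s.hold = some b → s.below b = none ∧ ∀ y, s.below y ≠ some b)

/-- `put_down(x)`: if the hand holds `x`, place `x` on the table and empty the
hand; otherwise the action is inapplicable and the state is unchanged. -/
def putdown {N : ℕ} (x : Fin N) (s : BState N) : BState N :=
  if s.hold = some x then { s with hold := none } else s

/-- `unstack(x,y)`: requires `on(x,y)`, `clear(x)` and `handempty`; the hand
then holds `x` and `y` becomes clear.  Inapplicable actions are no-ops. -/
def unstack {N : ℕ} (x y : Fin N) (s : BState N) : BState N :=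
  if s.hold = none ∧ s.below x = some y ∧ (∀ z, s.below z ≠ some x) then
    { below := Function.update s.below x none, hold := some x }
  else s

/-- All triples `(z1, z2, z3)` in lexicographic order: the iteration order of
the triple nested loop. -/
def lexTriples (N : ℕ) : List (Fin N × Fin N × Fin N) :=
  (List.finRange N).flatMap fun z1 =>
    (List.finRange N).flatMap fun z2 =>
      (List.finRange N).map fun z3 => (z1, z2, z3)

namespace BWaux

open Classical

variable {N : ℕ}

/-- one micro-step of the loop body for a pair `(z2, z3)` -/
def step (p : Fin N × Fin N) (s : BState N) : BState N :=
  unstack p.1 p.2 (putdown p.1 s)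

/-- run a list of slots -/
def runP (l : List (Fin N × Fin N)) (s : BState N) : BState N :=
  l.foldl (fun s p => step p s) s

/-- the slot list of one full pass over (z2, z3) -/
def pairsL (N : ℕ) : List (Fin N × Fin N) :=
  (List.finRange N).flatMap fun z2 => (List.finRange N).map fun z3 => (z2, z3)

def pass (s : BState N) : BState N := runP (pairsL N) s

def Done (s : BState N) : Prop := s.hold = none ∧ ∀ x, s.below x = none

def IsClear (s : BState N) (x : Fin N) : Prop := ∀ z, s.below z ≠ some x

def CS (s : BState N) (x : Fin N) : Prop := s.below x ≠ none ∧ IsClear s x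

noncomputable def nuF (s : BState N) : Finset (Fin N) :=
  Finset.univ.filter (fun x => s.below x ≠ none)

noncomputable def nu (s : BState N) : ℕ := (nuF s).card

def Pend (s : BState N) : Prop := ∃ b, s.hold = some b ∧ ∃ x, CS s x ∧ x < b

noncomputable def psi (s : BState N) : ℕ := nu s + (if Pend s then 1 else 0)

/-! ### basic action lemmas -/

lemma putdown_pos {s : BState N} {x : Fin N} (h : s.hold = some x) :
    putdown x s = { s with hold := none } := if_pos h

lemma putdown_noop {s : BState N} {x : Fin N} (h : s.hold ≠ some x) : putdown x s = s :=
  if_neg h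

lemma unstack_pos {s : BState N} {x y : Fin N}
    (h : s.hold = none ∧ s.below x = some y ∧ ∀ z, s.below z ≠ some x) :
    unstack x y s = { below := Function.update s.below x none, hold := some x } := if_pos h

lemma unstack_noop {s : BState N} {x y : Fin N}
    (h : ¬(s.hold = none ∧ s.below x = some y ∧ ∀ z, s.below z ≠ some x)) :
    unstack x y s = s := if_neg h

lemma step_noop_hold {s : BState N} {b : Fin N} {p : Fin N × Fin N}
    (hb : s.hold = some b) (hne : p.1 ≠ b) : step p s = s := by
  have h1 : putdown p.1 s = s := putdown_noop (by simp [hb, Ne.symm hne])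
  rw [step, h1, unstack_noop]
  simp [hb]

lemma step_noop_empty {s : BState N} {p : Fin N × Fin N}
    (hh : s.hold = none) (h : s.below p.1 ≠ some p.2 ∨ ¬ IsClear s p.1) : step p s = s := by
  have h1 : putdown p.1 s = s := putdown_noop (by simp [hh])
  rw [step, h1, unstack_noop]
  rintro ⟨-, h2, h3⟩
  rcases h with h | h
  · exact h h2
  · exact h h3

lemma step_putdown {s : BState N} {b : Fin N} {z3 : Fin N}
    (hb : s.hold = some b) (hbel : s.below b = none) :
    step (b, z3) s = { s with hold := none } := by
  rw [step, putdown_pos hb, unstack_noop]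
  rintro ⟨-, h2, -⟩
  simp [hbel] at h2

lemma step_unstack {s : BState N} {c y : Fin N}
    (hh : s.hold = none) (hcs : CS s c) (hy : s.below c = some y) :
    step (c, y) s = { below := Function.update s.below c none, hold := some c } := by
  have h1 : putdown c s = s := putdown_noop (by simp [hh])
  rw [step, h1, unstack_pos ⟨hh, hy, hcs.2⟩]

lemma done_step {s : BState N} (hd : Done s) (p : Fin N × Fin N) : step p s = s :=
  step_noop_empty hd.1 (Or.inl (by simp [hd.2 p.1]))

lemma done_runP {s : BState N} (hd : Done s) (l : List (Fin N × Fin N)) : runP l s = s := by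
  induction l with
  | nil => rfl
  | cons a l ih => rw [runP, List.foldl_cons, done_step hd a]; exact ih

/-! ### legality preservation -/

lemma legal_putdown {s : BState N} (hleg : Legal s) (x : Fin N) : Legal (putdown x s) := by
  by_cases h : s.hold = some x
  · rw [putdown_pos h]
    exact ⟨hleg.1, by simp⟩
  · rw [putdown_noop h]; exact hleg

lemma legal_unstack {s : BState N} (hleg : Legal s) (x y : Fin N) : Legal (unstack x y s) := by
  by_cases h : s.hold = none ∧ s.below x = some y ∧ ∀ z, s.below z ≠ some x
  · rw [unstack_pos h]
    obtain ⟨hfn, _⟩ := hleg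
    constructor
    · obtain ⟨f, hf⟩ := hfn
      refine ⟨f, fun a b hab => ?_⟩
      dsimp only at hab
      by_cases hax : a = x
      · subst hax; simp [Function.update_self] at hab
      · rw [Function.update_of_ne hax] at hab; exact hf a b hab
    · intro b hb
      simp only [Option.some_inj] at hb
      subst hb
      constructor
      · simp [Function.update_self]
      · intro z
        by_cases hzx : z = x
        · subst hzx; simp [Function.update_self]
        · show Function.update s.below x none z ≠ some x
          rw [Function.update_of_ne hzx]; exact h.2.2 z
  · rw [unstack_noop h]; exact hleg

lemma legal_step {s : BState N} (hleg : Legal s) (p : Fin N × Fin N) : Legal (step p s) :=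
  legal_unstack (legal_putdown hleg p.1) p.1 p.2

lemma legal_runP {s : BState N} (hleg : Legal s) (l : List (Fin N × Fin N)) :
    Legal (runP l s) := by
  induction l generalizing s with
  | nil => exact hleg
  | cons a l ih => exact ih (legal_step hleg a)

/-! ### counting lemmas -/

lemma nu_eq_of_below_eq {s t : BState N} (h : t.below = s.below) : nu t = nu s := by
  unfold nu nuF; rw [h]

lemma below_eq_none_of_nu_eq_zero {s : BState N} (h : nu s = 0) (x : Fin N) :
    s.below x = none := by
  by_contra hx
  have : x ∈ nuF s := by simp [nuF, hx]
  have := Finset.card_eq_zero.mp h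
  simp [this] at *

lemma nu_pos_of_stacked {s : BState N} {x : Fin N} (h : s.below x ≠ none) : 0 < nu s :=
  Finset.card_pos.mpr ⟨x, by simp [nuF, h]⟩

lemma nu_update {s : BState N} {c : Fin N} (hc : s.below c ≠ none)
    {t : BState N} (ht : t.below = Function.update s.below c none) :
    nu t + 1 = nu s := by
  have hmem : c ∈ nuF s := by simp [nuF, hc]
  have hset : nuF t = (nuF s).erase c := by
    ext x
    simp only [nuF, Finset.mem_filter, Finset.mem_univ, true_and, Finset.mem_erase, ht,
      Function.update_apply]
    by_cases hx : x = c <;> simp [hx]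
  have := Finset.card_erase_of_mem hmem
  rw [nu, hset, this, nu, Nat.sub_add_cancel (Finset.card_pos.mpr ⟨c, hmem⟩)]

/-! ### psi monotonicity -/

lemma psi_nopend {s : BState N} (h : ¬ Pend s) : psi s = nu s := by
  rw [psi, if_neg h]; omega

lemma psi_of_hold_none {s : BState N} (h : s.hold = none) : psi s = nu s :=
  psi_nopend (by rintro ⟨b, hb, -⟩; rw [h] at hb; cases hb)

lemma psi_putdown_le (s : BState N) (x : Fin N) : psi (putdown x s) ≤ psi s := by
  by_cases h : s.hold = some x
  · rw [putdown_pos h, psi_of_hold_none rfl]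
    have : nu { s with hold := none } = nu s := nu_eq_of_below_eq rfl
    rw [this, psi]
    omega
  · rw [putdown_noop h]

lemma psi_unstack_le (s : BState N) (x y : Fin N) : psi (unstack x y s) ≤ psi s := by
  by_cases h : s.hold = none ∧ s.below x = some y ∧ ∀ z, s.below z ≠ some x
  · rw [unstack_pos h, psi_of_hold_none h.1]
    have hnu : nu { below := Function.update s.below x none, hold := some x } + 1 = nu s :=
      nu_update (by simp [h.2.1]) rfl
    have hb : (if Pend { below := Function.update s.below x none, hold := some x } then 1 else 0) ≤ 1 := by
      split <;> omega
    rw [psi]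
    omega
  · rw [unstack_noop h]

lemma psi_step_le (s : BState N) (p : Fin N × Fin N) : psi (step p s) ≤ psi s :=
  le_trans (psi_unstack_le _ _ _) (psi_putdown_le _ _)

lemma psi_runP_le (l : List (Fin N × Fin N)) (s : BState N) : psi (runP l s) ≤ psi s := by
  induction l generalizing s with
  | nil => exact le_rfl
  | cons a l ih => exact le_trans (ih (step a s)) (psi_step_le s a)

/-! ### existence of a minimal clear stacked block -/

lemma exists_CS {s : BState N} (hleg : Legal s) (hnu : nu s ≠ 0) : ∃ c, CS s c := by
  obtain ⟨f, hf⟩ := hleg.1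
  have hne : (nuF s).Nonempty := Finset.card_pos.mp (Nat.pos_of_ne_zero hnu)
  obtain ⟨c, hc, hmax⟩ := Finset.exists_max_image (nuF s) f hne
  refine ⟨c, by simpa [nuF] using hc, fun z hz => ?_⟩
  have h1 : f z = f c + 1 := hf z c hz
  have hzm : z ∈ nuF s := by simp [nuF, hz]
  have := hmax z hzm
  omega

lemma nu_lt_of_legal {s : BState N} (hleg : Legal s) (hN : 0 < N) : nu s < N := by
  obtain ⟨f, hf⟩ := hleg.1
  obtain ⟨x, -, hmin⟩ := Finset.exists_min_image (Finset.univ : Finset (Fin N)) f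
    ⟨⟨0, hN⟩, Finset.mem_univ _⟩
  have hx : s.below x = none := by
    cases hbx : s.below x with
    | none => rfl
    | some y =>
      have h1 : f x = f y + 1 := hf x y hbx
      have := hmin y (Finset.mem_univ _)
      omega
  have hsub : nuF s ⊆ Finset.univ := Finset.subset_univ _
  have hxs : x ∉ nuF s := by simp [nuF, hx]
  have : nuF s ⊂ Finset.univ := ⟨hsub, fun hcon => hxs (hcon (Finset.mem_univ x))⟩
  have := Finset.card_lt_card this
  simpa [nu] using this

/-! ### frozen prefix -/

lemma runP_cons {s : BState N} {a : Fin N × Fin N} {l : List (Fin N × Fin N)} :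
    runP (a :: l) s = runP l (step a s) := rfl

lemma runP_frozen {s : BState N} {A l : List (Fin N × Fin N)}
    (h : ∀ p ∈ A, step p s = s) : runP (A ++ l) s = runP l s := by
  induction A with
  | nil => rfl
  | cons a A ih =>
    rw [List.cons_append, runP_cons, h a (by simp)]
    exact ih (fun p hp => h p (by simp [hp]))

/-! ### the tail lemma: strict psi decrease -/

lemma tail_lemma {w : BState N} (hh : w.hold = none)
    {c y : Fin N} (hcs : CS w c) (hy : w.below c = some y)
    (hmin : ∀ x, CS w x → ¬ x < c)
    {A T' : List (Fin N × Fin N)}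
    (hA : ∀ p ∈ A, p.1 < c ∨ (p.1 = c ∧ p.2 < y))
    (hT' : (y : ℕ) + 1 < N → ∃ y' T'', T' = (c, y') :: T'') :
    psi (runP (A ++ (c, y) :: T') w) < psi w := by
  have hfreeze : ∀ p ∈ A, step p w = w := by
    intro p hp
    rcases hA p hp with hlt | ⟨hpc, hpy⟩
    · refine step_noop_empty hh ?_
      by_cases hbp : w.below p.1 = some p.2
      · right
        intro hcl
        exact hmin p.1 ⟨by simp [hbp], hcl⟩ hlt
      · exact Or.inl hbp
    · refine step_noop_empty hh (Or.inl ?_)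
      rw [hpc, hy]
      simp only [ne_eq, Option.some_inj]
      exact fun hcon => absurd hcon.symm (Fin.ne_of_lt hpy)
  rw [runP_frozen hfreeze, runP_cons, step_unstack hh hcs hy]
  set v : BState N := { below := Function.update w.below c none, hold := some c } with hv
  have hnuv : nu v + 1 = nu w := nu_update hcs.1 rfl
  have hvc : v.below c = none := by simp [hv, Function.update_self]
  have hCSv : ∀ x, CS v x → x = y ∨ CS w x := by
    intro x ⟨hst, hcl⟩
    by_cases hxy : x = y
    · exact Or.inl hxy
    · right
      have hxc : x ≠ c := by
        intro hcon; subst hcon; exact hst hvc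
      constructor
      · have : v.below x = w.below x := by simp [hv, Function.update_of_ne hxc]
        rwa [this] at hst
      · intro z
        by_cases hzc : z = c
        · subst hzc
          rw [hy]
          simp only [ne_eq, Option.some_inj]
          exact fun hcon => hxy hcon.symm
        · have : w.below z = v.below z := by simp [hv, Function.update_of_ne hzc]
          rw [this]
          exact hcl z
  rw [psi_of_hold_none hh]
  by_cases hyN : (y : ℕ) + 1 < N
  · obtain ⟨y', T'', hT''⟩ := hT' hyN
    rw [hT'', runP_cons, step_putdown (by simp [hv]) hvc]
    calc psi (runP T'' { v with hold := none }) ≤ psi { v with hold := none } :=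
          psi_runP_le _ _
      _ = nu v := by rw [psi_of_hold_none rfl]; exact nu_eq_of_below_eq rfl
      _ < nu w := by omega
  · have hpv : ¬ Pend v := by
      rintro ⟨b, hb, x, hx, hxb⟩
      have hbc : b = c := by
        have : v.hold = some c := by simp [hv]
        rw [this] at hb
        exact (Option.some_inj.mp hb).symm
      rw [hbc] at hxb
      rcases hCSv x hx with hxy | hxw
      · subst hxy
        have h1 : (x : ℕ) < (c : ℕ) := hxb
        have h2 : (c : ℕ) < N := c.isLt
        have h3 : (x : ℕ) < N := x.isLt
        omega
      · exact hmin x hxw hxb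
    calc psi (runP T' v) ≤ psi v := psi_runP_le _ _
      _ = nu v := psi_nopend hpv
      _ < nu w := by omega

/-! ### decomposing the pass list -/

lemma pairsL_decomp (c y : Fin N) :
    ∃ A T', pairsL N = A ++ (c, y) :: T' ∧
      (∀ p ∈ A, p.1 < c ∨ (p.1 = c ∧ p.2 < y)) ∧
      ((y : ℕ) + 1 < N → ∃ y' T'', T' = (c, y') :: T'') := by
  obtain ⟨L1, L2, hL⟩ := List.append_of_mem (List.mem_finRange c)
  obtain ⟨M1, M2, hM⟩ := List.append_of_mem (List.mem_finRange y)
  have hpwL := List.pairwise_lt_finRange N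
  rw [hL, List.pairwise_append] at hpwL
  have hL1 : ∀ a ∈ L1, a < c := fun a ha => hpwL.2.2 a ha c (by simp)
  have hpwM := List.pairwise_lt_finRange N
  rw [hM, List.pairwise_append] at hpwM
  have hM1 : ∀ a ∈ M1, a < y := fun a ha => hpwM.2.2 a ha y (by simp)
  have hM2gt : ∀ a ∈ M2, y < a := (List.pairwise_cons.mp hpwM.2.1).1
  have hM2pw : M2.Pairwise (· < ·) := (List.pairwise_cons.mp hpwM.2.1).2
  refine ⟨L1.flatMap (fun z2 => (List.finRange N).map fun z3 => (z2, z3)) ++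
      M1.map (fun z3 => (c, z3)),
    M2.map (fun z3 => (c, z3)) ++
      L2.flatMap (fun z2 => (List.finRange N).map fun z3 => (z2, z3)), ?_, ?_, ?_⟩
  · have e1 : pairsL N = List.flatMap
        (fun z2 => (List.finRange N).map fun z3 => (z2, z3)) (L1 ++ c :: L2) :=
      congrArg (fun l => List.flatMap _ l) hL
    have e2 : (List.finRange N).map (fun z3 => (c, z3)) =
        M1.map (fun z3 => (c, z3)) ++ ((c, y) :: M2.map (fun z3 => (c, z3))) := by
      rw [hM, List.map_append, List.map_cons]
    rw [e1, List.flatMap_append, List.flatMap_cons, e2]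
    simp [List.append_assoc]
  · intro p hp
    rcases List.mem_append.mp hp with hp1 | hp2
    · obtain ⟨z2, hz2, hpz⟩ := List.mem_flatMap.mp hp1
      obtain ⟨z3, -, rfl⟩ := List.mem_map.mp hpz
      exact Or.inl (hL1 z2 hz2)
    · obtain ⟨z3, hz3, rfl⟩ := List.mem_map.mp hp2
      exact Or.inr ⟨rfl, hM1 z3 hz3⟩
  · intro hyN
    set y' : Fin N := ⟨(y : ℕ) + 1, hyN⟩ with hy'
    have hyy' : y < y' := by simp [hy', Fin.lt_def]
    have hy'M2 : y' ∈ M2 := by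
      have : y' ∈ List.finRange N := List.mem_finRange y'
      rw [hM] at this
      rcases List.mem_append.mp this with h1 | h2
      · exact absurd (hM1 y' h1) (by simp [Fin.lt_def, hy'])
      · rcases List.mem_cons.mp h2 with h3 | h4
        · exact absurd h3 (Fin.ne_of_gt hyy')
        · exact h4
    obtain ⟨Q1, Q2, hQ⟩ := List.append_of_mem hy'M2
    have hQ1 : Q1 = [] := by
      rw [List.eq_nil_iff_forall_not_mem]
      intro a ha
      have h1 : y < a := hM2gt a (by rw [hQ]; exact List.mem_append_left _ ha)
      have h2 : a < y' := by
        rw [hQ, List.pairwise_append] at hM2pw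
        exact hM2pw.2.2 a ha y' (by simp)
      rw [Fin.lt_def] at h1 h2
      simp [hy'] at h2
      omega
    refine ⟨y', Q2.map (fun z3 => (c, z3)) ++
      L2.flatMap (fun z2 => (List.finRange N).map fun z3 => (z2, z3)), ?_⟩
    rw [hQ, hQ1, List.nil_append, List.map_cons, List.cons_append]

lemma pairsL_decomp_first (b : Fin N) :
    ∃ A z30 R, pairsL N = A ++ (b, z30) :: R ∧ (∀ p ∈ A, p.1 < b) := by
  obtain ⟨L1, L2, hL⟩ := List.append_of_mem (List.mem_finRange b)
  have hpwL := List.pairwise_lt_finRange N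
  rw [hL, List.pairwise_append] at hpwL
  have hL1 : ∀ a ∈ L1, a < b := fun a ha => hpwL.2.2 a ha b (by simp)
  have hN : 0 < N := b.pos
  obtain ⟨hd, tl, hft⟩ : ∃ hd tl, List.finRange N = hd :: tl := by
    cases hfr : List.finRange N with
    | nil =>
      exfalso
      have := List.mem_finRange b
      rw [hfr] at this
      simp at this
    | cons hd tl => exact ⟨hd, tl, rfl⟩
  refine ⟨L1.flatMap (fun z2 => (List.finRange N).map fun z3 => (z2, z3)), hd,
    tl.map (fun z3 => (b, z3)) ++
      L2.flatMap (fun z2 => (List.finRange N).map fun z3 => (z2, z3)), ?_, ?_⟩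
  · have e1 : pairsL N = List.flatMap
        (fun z2 => (List.finRange N).map fun z3 => (z2, z3)) (L1 ++ b :: L2) :=
      congrArg (fun l => List.flatMap _ l) hL
    have e2 : (List.finRange N).map (fun z3 => (b, z3)) =
        (b, hd) :: tl.map (fun z3 => (b, z3)) := by
      rw [hft, List.map_cons]
    rw [e1, List.flatMap_append, List.flatMap_cons, e2]
    simp [List.append_assoc]
  · intro p hp
    obtain ⟨z2, hz2, hpz⟩ := List.mem_flatMap.mp hp
    obtain ⟨z3, -, rfl⟩ := List.mem_map.mp hpz
    exact hL1 z2 hz2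

lemma pairsL_decomp_hold {b c : Fin N} (y : Fin N) (hbc : b < c) :
    ∃ A z30 A' T', pairsL N = A ++ (b, z30) :: (A' ++ (c, y) :: T') ∧
      (∀ p ∈ A, p.1 < b) ∧
      (∀ p ∈ A', p.1 < c ∨ (p.1 = c ∧ p.2 < y)) ∧
      ((y : ℕ) + 1 < N → ∃ y' T'', T' = (c, y') :: T'') := by
  obtain ⟨L1, L2, hL⟩ := List.append_of_mem (List.mem_finRange b)
  have hpwL := List.pairwise_lt_finRange N
  rw [hL, List.pairwise_append] at hpwL
  have hL1 : ∀ a ∈ L1, a < b := fun a ha => hpwL.2.2 a ha b (by simp)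
  have hbL2 : ∀ a ∈ L2, b < a := (List.pairwise_cons.mp hpwL.2.1).1
  have hL2pw : L2.Pairwise (· < ·) := (List.pairwise_cons.mp hpwL.2.1).2
  have hcL2 : c ∈ L2 := by
    have : c ∈ List.finRange N := List.mem_finRange c
    rw [hL] at this
    rcases List.mem_append.mp this with h1 | h2
    · exact absurd (hL1 c h1) (by simp [Fin.lt_asymm hbc])
    · rcases List.mem_cons.mp h2 with h3 | h4
      · exact absurd h3 (Fin.ne_of_gt hbc)
      · exact h4
  obtain ⟨L2a, L2b, hL2⟩ := List.append_of_mem hcL2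
  rw [hL2, List.pairwise_append] at hL2pw
  have hL2a : ∀ a ∈ L2a, a < c := fun a ha => hL2pw.2.2 a ha c (by simp)
  obtain ⟨hd, tl, hft⟩ : ∃ hd tl, List.finRange N = hd :: tl := by
    cases hfr : List.finRange N with
    | nil =>
      exfalso
      have := List.mem_finRange b
      rw [hfr] at this
      simp at this
    | cons hd tl => exact ⟨hd, tl, rfl⟩
  obtain ⟨M1, M2, hM⟩ := List.append_of_mem (List.mem_finRange y)
  have hpwM := List.pairwise_lt_finRange N
  rw [hM, List.pairwise_append] at hpwM
  have hM1 : ∀ a ∈ M1, a < y := fun a ha => hpwM.2.2 a ha y (by simp)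
  have hM2gt : ∀ a ∈ M2, y < a := (List.pairwise_cons.mp hpwM.2.1).1
  have hM2pw : M2.Pairwise (· < ·) := (List.pairwise_cons.mp hpwM.2.1).2
  refine ⟨L1.flatMap (fun z2 => (List.finRange N).map fun z3 => (z2, z3)), hd,
    tl.map (fun z3 => (b, z3)) ++
      (L2a.flatMap (fun z2 => (List.finRange N).map fun z3 => (z2, z3)) ++
        M1.map (fun z3 => (c, z3))),
    M2.map (fun z3 => (c, z3)) ++
      L2b.flatMap (fun z2 => (List.finRange N).map fun z3 => (z2, z3)), ?_, ?_, ?_, ?_⟩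
  · have e1 : pairsL N = List.flatMap
        (fun z2 => (List.finRange N).map fun z3 => (z2, z3)) (L1 ++ b :: (L2a ++ c :: L2b)) := by
      rw [← hL2]
      exact congrArg (fun l => List.flatMap _ l) hL
    have e2 : (List.finRange N).map (fun z3 => (b, z3)) =
        (b, hd) :: tl.map (fun z3 => (b, z3)) := by
      rw [hft, List.map_cons]
    have e3 : (List.finRange N).map (fun z3 => (c, z3)) =
        M1.map (fun z3 => (c, z3)) ++ ((c, y) :: M2.map (fun z3 => (c, z3))) := by
      rw [hM, List.map_append, List.map_cons]
    rw [e1, List.flatMap_append, List.flatMap_cons, List.flatMap_append,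
      List.flatMap_cons, e2, e3]
    simp [List.append_assoc]
  · intro p hp
    obtain ⟨z2, hz2, hpz⟩ := List.mem_flatMap.mp hp
    obtain ⟨z3, -, rfl⟩ := List.mem_map.mp hpz
    exact hL1 z2 hz2
  · intro p hp
    rcases List.mem_append.mp hp with hp1 | hp2
    · obtain ⟨z3, -, rfl⟩ := List.mem_map.mp hp1
      exact Or.inl hbc
    · rcases List.mem_append.mp hp2 with hp3 | hp4
      · obtain ⟨z2, hz2, hpz⟩ := List.mem_flatMap.mp hp3
        obtain ⟨z3, -, rfl⟩ := List.mem_map.mp hpz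
        exact Or.inl (hL2a z2 hz2)
      · obtain ⟨z3, hz3, rfl⟩ := List.mem_map.mp hp4
        exact Or.inr ⟨rfl, hM1 z3 hz3⟩
  · intro hyN
    set y' : Fin N := ⟨(y : ℕ) + 1, hyN⟩ with hy'
    have hyy' : y < y' := by simp [hy', Fin.lt_def]
    have hy'M2 : y' ∈ M2 := by
      have : y' ∈ List.finRange N := List.mem_finRange y'
      rw [hM] at this
      rcases List.mem_append.mp this with h1 | h2
      · exact absurd (hM1 y' h1) (by simp [Fin.lt_def, hy'])
      · rcases List.mem_cons.mp h2 with h3 | h4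
        · exact absurd h3 (Fin.ne_of_gt hyy')
        · exact h4
    obtain ⟨Q1, Q2, hQ⟩ := List.append_of_mem hy'M2
    have hQ1 : Q1 = [] := by
      rw [List.eq_nil_iff_forall_not_mem]
      intro a ha
      have h1 : y < a := hM2gt a (by rw [hQ]; exact List.mem_append_left _ ha)
      have h2 : a < y' := by
        rw [hQ, List.pairwise_append] at hM2pw
        exact hM2pw.2.2 a ha y' (by simp)
      rw [Fin.lt_def] at h1 h2
      simp [hy'] at h2
      omega
    refine ⟨y', Q2.map (fun z3 => (c, z3)) ++
      L2b.flatMap (fun z2 => (List.finRange N).map fun z3 => (z2, z3)), ?_⟩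
    rw [hQ, hQ1, List.nil_append, List.map_cons, List.cons_append]

/-! ### minimal clear stacked block -/

lemma exists_min_CS {s : BState N} (hleg : Legal s) (hnu : nu s ≠ 0) :
    ∃ c, CS s c ∧ ∀ x, CS s x → ¬ x < c := by
  classical
  obtain ⟨c0, hc0⟩ := exists_CS hleg hnu
  let S : Finset (Fin N) := Finset.univ.filter (fun x => CS s x)
  have hSne : S.Nonempty := ⟨c0, by simp [S, hc0]⟩
  obtain ⟨c, hcS, hcmin⟩ := Finset.exists_min_image S id hSne
  refine ⟨c, by simpa [S] using hcS, fun x hx hlt => ?_⟩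
  have : c ≤ x := hcmin x (by simp [S, hx])
  exact absurd hlt (not_lt.mpr this)

lemma CS_below_some {s : BState N} {c : Fin N} (hcs : CS s c) : ∃ y, s.below c = some y := by
  cases hb : s.below c with
  | none => exact absurd hb hcs.1
  | some y => exact ⟨y, rfl⟩

/-! ### the pass lemma -/

lemma pass_lemma {s : BState N} (hleg : Legal s) (hnd : ¬ Done s) :
    Done (pass s) ∨ psi (pass s) < psi s := by
  cases hhold : s.hold with
  | none =>
    have hnu : nu s ≠ 0 := by
      intro h0
      exact hnd ⟨hhold, below_eq_none_of_nu_eq_zero h0⟩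
    obtain ⟨c, hcs, hmin⟩ := exists_min_CS hleg hnu
    obtain ⟨y, hy⟩ := CS_below_some hcs
    obtain ⟨A, T', hpair, hA, hT'⟩ := pairsL_decomp c y
    right
    rw [pass, hpair]
    exact tail_lemma hhold hcs hy hmin hA hT'
  | some b =>
    have hbel : s.below b = none := (hleg.2 b hhold).1
    by_cases hpend : Pend s
    · obtain ⟨A, z30, R, hpair, hA⟩ := pairsL_decomp_first b
      right
      have hfreeze : ∀ p ∈ A, step p s = s := fun p hp =>
        step_noop_hold hhold (Fin.ne_of_lt (hA p hp))
      rw [pass, hpair, runP_frozen hfreeze, runP_cons, step_putdown hhold hbel]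
      have h1 : psi { s with hold := none } = nu s := by
        rw [psi_of_hold_none rfl]
        exact nu_eq_of_below_eq rfl
      have h2 : psi s = nu s + 1 := by rw [psi, if_pos hpend]
      have h3 : psi (runP R { s with hold := none }) ≤ psi { s with hold := none } :=
        psi_runP_le _ _
      omega
    · by_cases hnu : nu s = 0
      · left
        obtain ⟨A, z30, R, hpair, hA⟩ := pairsL_decomp_first b
        have hfreeze : ∀ p ∈ A, step p s = s := fun p hp =>
          step_noop_hold hhold (Fin.ne_of_lt (hA p hp))
        rw [pass, hpair, runP_frozen hfreeze, runP_cons, step_putdown hhold hbel]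
        have hd : Done { s with hold := none } :=
          ⟨rfl, below_eq_none_of_nu_eq_zero hnu⟩
        rw [done_runP hd]
        exact hd
      · right
        obtain ⟨c, hcs, hmin⟩ := exists_min_CS hleg hnu
        obtain ⟨y, hy⟩ := CS_below_some hcs
        have hbc : b < c := by
          rcases lt_trichotomy b c with h | h | h
          · exact h
          · exfalso
            exact hcs.1 (h ▸ hbel)
          · exact absurd ⟨b, hhold, c, hcs, h⟩ hpend
        obtain ⟨A, z30, A', T', hpair, hA, hA', hT'⟩ := pairsL_decomp_hold y hbc
        have hfreeze : ∀ p ∈ A, step p s = s := fun p hp =>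
          step_noop_hold hhold (Fin.ne_of_lt (hA p hp))
        rw [pass, hpair, runP_frozen hfreeze, runP_cons, step_putdown hhold hbel]
        set w : BState N := { s with hold := none } with hw
        have hlegw : Legal w := ⟨hleg.1, by simp [hw]⟩
        have hcsw : CS w c := hcs
        have hminw : ∀ x, CS w x → ¬ x < c := hmin
        have := tail_lemma (rfl : w.hold = none) hcsw hy hminw hA' hT'
        have h1 : psi w = nu s := by
          rw [psi_of_hold_none rfl]
          exact nu_eq_of_below_eq rfl
        have h2 : psi s = nu s := psi_nopend hpend
        omega

/-! ### iterating passes -/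

lemma iter_done (l : List (Fin N)) :
    ∀ s : BState N, Legal s → (Done s ∨ psi s < l.length) →
    Done (l.foldl (fun s _ => pass s) s) := by
  induction l with
  | nil =>
    rintro s _ (hd | h)
    · exact hd
    · simp at h
  | cons a l ih =>
    intro s hleg hor
    rw [List.foldl_cons]
    by_cases hds : Done s
    · have hps : pass s = s := done_runP hds _
      rw [hps]
      exact ih s hleg (Or.inl hds)
    · have hlt : psi s < l.length + 1 := by
        rcases hor with hd | h
        · exact absurd hd hds
        · simpa using h
      have hlegp : Legal (pass s) := legal_runP hleg _
      rcases pass_lemma hleg hds with hd | hp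
      · exact ih _ hlegp (Or.inl hd)
      · exact ih _ hlegp (Or.inr (by omega))

/-! ### rewriting the triple fold -/

lemma foldl_flatMap {α β σ : Type*} (f : σ → β → σ) (g : α → List β) (l : List α) (s : σ) :
    (l.flatMap g).foldl f s = l.foldl (fun s a => (g a).foldl f s) s := by
  induction l generalizing s with
  | nil => rfl
  | cons a l ih =>
    rw [List.flatMap_cons, List.foldl_append, List.foldl_cons, ih]

lemma pass_eq (z1 : Fin N) (s : BState N) :
    ((List.finRange N).flatMap fun z2 => (List.finRange N).map fun z3 => (z1, z2, z3)).foldl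
      (fun s (t : Fin N × Fin N × Fin N) => unstack t.2.1 t.2.2 (putdown t.2.1 s)) s
      = pass s := by
  rw [foldl_flatMap, pass, runP, pairsL, foldl_flatMap]
  congr 1
  funext s' z2
  rw [List.foldl_map, List.foldl_map]
  rfl

lemma fold_lex (s0 : BState N) :
    (lexTriples N).foldl (fun s t => unstack t.2.1 t.2.2 (putdown t.2.1 s)) s0 =
    (List.finRange N).foldl (fun s _ => pass s) s0 := by
  rw [lexTriples, foldl_flatMap]
  congr 1
  funext s z1
  exact pass_eq z1 s

lemma main_done (s0 : BState N) (hleg : Legal s0) (hhand : s0.hold = none) :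
    Done ((lexTriples N).foldl (fun s t => unstack t.2.1 t.2.2 (putdown t.2.1 s)) s0) := by
  rw [fold_lex]
  apply iter_done _ s0 hleg
  rcases Nat.eq_zero_or_pos N with hN | hN
  · left
    subst hN
    exact ⟨hhand, fun x => x.elim0⟩
  · right
    rw [psi_of_hold_none hhand, List.length_finRange]
    exact nu_lt_of_legal hleg hN

end BWaux

/-- Executing the triple-nested-loop generalized plan, which for every triple
`(z1, z2, z3)` attempts `put_down(z2)` and then `unstack(z2, z3)`, from any
legal Blocksworld state with the hand empty, leaves every block on the table
(and the hand empty). -/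
theorem ontable_program_correct
    (N : ℕ) (s0 : BState N) (hleg : Legal s0) (hhand : s0.hold = none) :
    let sf := (lexTriples N).foldl
      (fun s t => unstack t.2.1 t.2.2 (putdown t.2.1 s)) s0
    sf.hold = none ∧ ∀ x : Fin N, sf.below x = none := by
  have key := BWaux.main_done s0 hleg hhand
  exact ⟨key.1, key.2⟩
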